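/- arXiv:2409.02209 — 5 statements merged into one kernel-verified Lean document; each statement's English description precedes it below -/
import Mathlib

section
/- For every real t, the product of the Kaplan–Meier estimator of the failure-time survival function and the Kaplan–Meier estimator of the censoring survival function equals the empirical survival function of the observation times: Ŝ(t) · Ĝ(t) = #{i : x_i > t} / n. -/
open Finset

/-- Number at risk at time `u`: `Y(u) = #{j : x_j ≥ u}`. -/
noncomputable def atRisk {n : ℕ} (x : Fin n → ℝ) (u : ℝ) : ℕ :=
  (univ.filter fun j => u ≤ x j).card

/-- Kaplan–Meier estimator of the failure-time survival function:
`Ŝ(t) = ∏_{i : x_i ≤ t, δ_i = 1} (1 − 1/Y(x_i))`. -/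
noncomputable def kmS {n : ℕ} (x : Fin n → ℝ) (δ : Fin n → Bool) (t : ℝ) : ℝ :=
  ∏ i ∈ univ.filter (fun i => x i ≤ t ∧ δ i = true), (1 - 1 / (atRisk x (x i) : ℝ))

/-- Kaplan–Meier estimator of the censoring survival function:
`Ĝ(t) = ∏_{i : x_i ≤ t, δ_i = 0} (1 − 1/Y(x_i))`. -/
noncomputable def kmG {n : ℕ} (x : Fin n → ℝ) (δ : Fin n → Bool) (t : ℝ) : ℝ :=
  ∏ i ∈ univ.filter (fun i => x i ≤ t ∧ δ i = false), (1 - 1 / (atRisk x (x i) : ℝ))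

lemma telescope : ∀ (k N : ℕ), k ≤ N → 0 < N →
    ∏ m ∈ Ioc (N - k) N, (1 - 1/(m:ℝ)) = ((N - k : ℕ) : ℝ)/N := by
  intro k
  induction k with
  | zero =>
    intro N _ hN
    simp [div_self (by positivity : (N:ℝ) ≠ 0)]
  | succ k ih =>
    intro N hk hN
    have hk' : k ≤ N := Nat.le_of_succ_le hk
    have h1 : 1 ≤ N - k := by omega
    have hins : Ioc (N - (k+1)) N = insert (N - k) (Ioc (N - k) N) := by
      ext m; simp only [Finset.mem_Ioc, Finset.mem_insert]; omega
    rw [hins, Finset.prod_insert (by simp), ih N hk' hN]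
    have ha : (0:ℝ) < ((N - k : ℕ) : ℝ) := by exact_mod_cast h1
    have hcast : ((N - (k+1) : ℕ) : ℝ) = ((N - k : ℕ) : ℝ) - 1 := by
      have : N - (k+1) + 1 = N - k := by omega
      rw [← this]; push_cast; ring
    rw [hcast]
    rw [Nat.cast_sub hk'] at ha ⊢
    have hne : (N:ℝ) - k ≠ 0 := ne_of_gt ha
    field_simp

/-- **The product of the two Kaplan–Meier estimators is the empirical survival
function of the observation times:** `Ŝ(t) · Ĝ(t) = #{i : x_i > t} / n`. -/
theorem km_product_eq_empirical {n : ℕ} (hn : 0 < n)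
    (x : Fin n → ℝ) (δ : Fin n → Bool)
    (hpos : ∀ i, 0 < x i) (hinj : Function.Injective x) :
    ∀ t : ℝ, kmS x δ t * kmG x δ t
      = ((univ.filter fun i => t < x i).card : ℝ) / n := by
  intro t
  classical
  set A : Finset (Fin n) := univ.filter (fun i => x i ≤ t) with hA
  set k : ℕ := A.card with hk
  have hkn : k ≤ n := by
    calc k ≤ (univ : Finset (Fin n)).card := Finset.card_le_card (Finset.filter_subset _ _)
    _ = n := by simp
  -- the complement count
  have hcompl : (univ.filter fun i => t < x i).card = n - k := by
    have := Finset.card_filter_add_card_filter_not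
      (s := (univ : Finset (Fin n))) (p := fun i => x i ≤ t)
    simp only [Finset.card_univ, Fintype.card_fin, not_le] at this
    have hAcard : (univ.filter fun i => x i ≤ t).card = k := by rw [hk, hA]
    omega
  -- combine the two products
  have hcomb : kmS x δ t * kmG x δ t = ∏ i ∈ A, (1 - 1 / (atRisk x (x i) : ℝ)) := by
    rw [kmS, kmG]
    have h1 : univ.filter (fun i => x i ≤ t ∧ δ i = true)
        = A.filter (fun i => δ i = true) := by
      rw [hA, Finset.filter_filter]
    have h2 : univ.filter (fun i => x i ≤ t ∧ δ i = false)
        = A.filter (fun i => ¬ (δ i = true)) := by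
      rw [hA, Finset.filter_filter]
      simp [Bool.not_eq_true]
    rw [h1, h2, Finset.prod_filter_mul_prod_filter_not]
  -- injectivity of the at-risk map
  have ginj : ∀ i j, atRisk x (x i) = atRisk x (x j) → i = j := by
    intro i j hij
    rcases le_total (x i) (x j) with h | h
    · have hsub : univ.filter (fun u => x j ≤ x u) ⊆ univ.filter (fun u => x i ≤ x u) := by
        intro u hu
        simp only [Finset.mem_filter, Finset.mem_univ, true_and] at hu ⊢
        exact le_trans h hu
      have heq : univ.filter (fun u => x j ≤ x u) = univ.filter (fun u => x i ≤ x u) :=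
        Finset.eq_of_subset_of_card_le hsub (le_of_eq hij)
      have hi : i ∈ univ.filter (fun u => x i ≤ x u) := by simp
      rw [← heq] at hi
      simp only [Finset.mem_filter, Finset.mem_univ, true_and] at hi
      exact hinj (le_antisymm h hi)
    · have hsub : univ.filter (fun u => x i ≤ x u) ⊆ univ.filter (fun u => x j ≤ x u) := by
        intro u hu
        simp only [Finset.mem_filter, Finset.mem_univ, true_and] at hu ⊢
        exact le_trans h hu
      have heq : univ.filter (fun u => x i ≤ x u) = univ.filter (fun u => x j ≤ x u) :=
        Finset.eq_of_subset_of_card_le hsub (ge_of_eq hij)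
      have hj : j ∈ univ.filter (fun u => x j ≤ x u) := by simp
      rw [← heq] at hj
      simp only [Finset.mem_filter, Finset.mem_univ, true_and] at hj
      exact hinj (le_antisymm hj h)
  -- bounds for the at-risk map on A
  have hmem : ∀ i ∈ A, atRisk x (x i) ∈ Ioc (n - k) n := by
    intro i hi
    simp only [hA, Finset.mem_filter, Finset.mem_univ, true_and] at hi
    simp only [Finset.mem_Ioc]
    constructor
    · have hsub : insert i (univ.filter fun u => t < x u)
          ⊆ univ.filter (fun u => x i ≤ x u) := by
        intro u hu
        simp only [Finset.mem_insert, Finset.mem_filter, Finset.mem_univ, true_and] at hu ⊢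
        rcases hu with rfl | hu
        · exact le_refl _
        · exact le_of_lt (lt_of_le_of_lt hi hu)
      have hnotmem : i ∉ (univ.filter fun u => t < x u) := by
        simp only [Finset.mem_filter, Finset.mem_univ, true_and, not_lt]
        exact hi
      have hcard : (insert i (univ.filter fun u => t < x u)).card = (n - k) + 1 := by
        rw [Finset.card_insert_of_notMem hnotmem, hcompl]
      have := Finset.card_le_card hsub
      rw [hcard] at this
      have : n - k + 1 ≤ atRisk x (x i) := this
      omega
    · calc atRisk x (x i) ≤ (univ : Finset (Fin n)).card :=
            Finset.card_le_card (Finset.filter_subset _ _)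
      _ = n := by simp
  -- image of A under the at-risk map is exactly Ioc (n-k) n
  have himg : A.image (fun i => atRisk x (x i)) = Ioc (n - k) n := by
    apply Finset.eq_of_subset_of_card_le
    · intro m hm
      simp only [Finset.mem_image] at hm
      obtain ⟨i, hi, rfl⟩ := hm
      exact hmem i hi
    · rw [Finset.card_image_of_injOn (fun i _ j _ h => ginj i j h)]
      rw [Nat.card_Ioc]
      omega
  have hprod : ∏ i ∈ A, (1 - 1 / (atRisk x (x i) : ℝ))
      = ∏ m ∈ Ioc (n - k) n, (1 - 1/(m:ℝ)) := by
    rw [← himg, Finset.prod_image (fun i _ j _ h => ginj i j h)]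
  rw [hcomb, hprod, telescope k n hkn hn, hcompl]
end

section
/- The Kaplan–Meier estimator admits the inverse-probability-of-censoring-weighted (IPCW) representation: for every real t, 1 − Ŝ(t) = (1/n) Σ_{i : δ_i = 1, x_i ≤ t} 1/Ĝ(x_i−), where each term is well defined because Ĝ(x_i−) > 0 for every i. -/
open Finset

/-- Left limit of the Kaplan–Meier estimator of the censoring survival function:
`Ĝ(t−) = ∏_{i : x_i < t, δ_i = 0} (1 − 1/Y(x_i))`. -/
noncomputable def kmGminus {n : ℕ} (x : Fin n → ℝ) (δ : Fin n → Bool) (t : ℝ) : ℝ :=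
  ∏ i ∈ univ.filter (fun i => x i < t ∧ δ i = false), (1 - 1 / (atRisk x (x i) : ℝ))

lemma atRisk_pos {n : ℕ} (x : Fin n → ℝ) (m : Fin n) : 0 < atRisk x (x m) :=
  Finset.card_pos.mpr ⟨m, by simp⟩

lemma atRisk_two {n : ℕ} (x : Fin n → ℝ) {j m : Fin n} (h : x j < x m) :
    2 ≤ atRisk x (x j) := by
  have hjm : j ≠ m := fun e => absurd (e ▸ h) (lt_irrefl _)
  have hsub : ({j, m} : Finset (Fin n)) ⊆ univ.filter (fun k => x j ≤ x k) := by
    intro k hk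
    simp only [mem_insert, mem_singleton] at hk
    rcases hk with rfl | rfl <;> simp [le_of_lt h]
  calc 2 = ({j, m} : Finset (Fin n)).card := by rw [Finset.card_pair hjm]
    _ ≤ _ := Finset.card_le_card hsub

lemma factor_pos {n : ℕ} (x : Fin n → ℝ) {j m : Fin n} (h : x j < x m) :
    0 < 1 - 1 / (atRisk x (x j) : ℝ) := by
  have h2 : (2 : ℝ) ≤ (atRisk x (x j) : ℝ) := by exact_mod_cast atRisk_two x h
  have : 1 / (atRisk x (x j) : ℝ) ≤ 1 / 2 := by
    apply one_div_le_one_div_of_le <;> linarith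
  linarith

lemma card_compl {n : ℕ} (x : Fin n → ℝ) (m : Fin n) :
    (univ.filter fun j => x j < x m).card + atRisk x (x m) = n := by
  have := Finset.card_filter_add_card_filter_not
    (s := (univ : Finset (Fin n))) (p := fun j => x j < x m)
  simp only [Finset.card_univ, Fintype.card_fin, not_lt] at this
  simpa [atRisk] using this

/-- the strictly-below set equals `s.erase m` when `m` is max of a downward-closed `s` -/
lemma below_eq_erase {n : ℕ} (x : Fin n → ℝ) (hinj : Function.Injective x)
    {s : Finset (Fin n)} {m : Fin n} (hm : m ∈ s)
    (hmax : ∀ i ∈ s, x i ≤ x m)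
    (hdc : ∀ i ∈ s, ∀ j, x j < x i → j ∈ s) :
    (univ.filter fun j => x j < x m) = s.erase m := by
  ext j
  simp only [mem_filter, mem_univ, true_and, mem_erase]
  constructor
  · intro h
    exact ⟨fun e => absurd (e ▸ h) (lt_irrefl _), hdc m hm j h⟩
  · rintro ⟨hne, hj⟩
    exact lt_of_le_of_ne (hmax j hj) (fun e => hne (hinj e))

/-- Lemma A: product over a downward-closed index set. -/
lemma prodA {n : ℕ} (hn : 0 < n) (x : Fin n → ℝ) (hinj : Function.Injective x)
    (s : Finset (Fin n))
    (hdc : ∀ i ∈ s, ∀ j, x j < x i → j ∈ s) :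
    ∏ i ∈ s, (1 - 1 / (atRisk x (x i) : ℝ)) = ((n : ℝ) - s.card) / n := by
  induction s using Finset.strongInduction with
  | _ s ih =>
    rcases s.eq_empty_or_nonempty with rfl | hne
    · have : (n : ℝ) ≠ 0 := by positivity
      simp [this]
    · obtain ⟨m, hm, hmax⟩ := Finset.exists_max_image s x hne
      have hber := below_eq_erase x hinj hm hmax hdc
      have hcard : (s.erase m).card + atRisk x (x m) = n := by
        rw [← hber]; exact card_compl x m
      have hdc' : ∀ i ∈ s.erase m, ∀ j, x j < x i → j ∈ s.erase m := by
        intro i hi j hj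
        rw [← hber]; simp only [mem_filter, mem_univ, true_and]
        exact lt_of_lt_of_le hj (hmax i (Finset.mem_of_mem_erase hi))
      have hYpos : 0 < (atRisk x (x m) : ℝ) := by exact_mod_cast atRisk_pos x m
      have hY : (atRisk x (x m) : ℝ) = (n : ℝ) - (s.erase m).card := by
        have h2 : ((s.erase m).card : ℝ) + (atRisk x (x m) : ℝ) = n := by exact_mod_cast hcard
        linarith
      have hnne : (n : ℝ) ≠ 0 := by positivity
      have hne0 : ((n : ℝ) - (s.erase m).card) ≠ 0 := by rw [← hY]; exact ne_of_gt hYpos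
      rw [← Finset.insert_erase hm, Finset.prod_insert (Finset.notMem_erase m s),
        ih (s.erase m) (Finset.erase_ssubset hm) hdc',
        Finset.card_insert_of_notMem (Finset.notMem_erase m s)]
      rw [hY] at hYpos ⊢
      push_cast
      have h2 : ((s.erase m).card : ℝ) = (s.card : ℝ) - 1 := by
        have h3 : (s.erase m).card + 1 = s.card := Finset.card_erase_add_one hm
        have h4 : ((s.erase m).card : ℝ) + 1 = (s.card : ℝ) := by exact_mod_cast h3
        linarith
      have hd : (1 + ((n : ℝ) - s.card)) ≠ 0 := by
        intro h; apply hne0; linarith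
      rw [h2] at hne0 hYpos ⊢
      field_simp
      ring

/-- Lemma B: telescoping. -/
lemma teleB {n : ℕ} (x : Fin n → ℝ) (δ : Fin n → Bool) (hinj : Function.Injective x)
    (s : Finset (Fin n)) (hδ : ∀ i ∈ s, δ i = true)
    (hdc : ∀ i ∈ s, ∀ j, δ j = true → x j < x i → j ∈ s) :
    1 - ∏ i ∈ s, (1 - 1 / (atRisk x (x i) : ℝ))
      = ∑ i ∈ s, (∏ j ∈ univ.filter (fun j => x j < x i ∧ δ j = true),
          (1 - 1 / (atRisk x (x j) : ℝ))) * (1 / (atRisk x (x i) : ℝ)) := by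
  induction s using Finset.strongInduction with
  | _ s ih =>
    rcases s.eq_empty_or_nonempty with rfl | hne
    · simp
    · obtain ⟨m, hm, hmax⟩ := Finset.exists_max_image s x hne
      have hber : (univ.filter fun j => x j < x m ∧ δ j = true) = s.erase m := by
        ext j
        simp only [mem_filter, mem_univ, true_and, mem_erase]
        constructor
        · rintro ⟨h1, h2⟩
          exact ⟨fun e => absurd (e ▸ h1) (lt_irrefl _), hdc m hm j h2 h1⟩
        · rintro ⟨hne2, hj⟩
          exact ⟨lt_of_le_of_ne (hmax j hj) (fun e => hne2 (hinj e)), hδ j hj⟩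
      have hδ' : ∀ i ∈ s.erase m, δ i = true := fun i hi => hδ i (Finset.mem_of_mem_erase hi)
      have hdc' : ∀ i ∈ s.erase m, ∀ j, δ j = true → x j < x i → j ∈ s.erase m := by
        intro i hi j hj1 hj2
        rw [← hber]; simp only [mem_filter, mem_univ, true_and]
        exact ⟨lt_of_lt_of_le hj2 (hmax i (Finset.mem_of_mem_erase hi)), hj1⟩
      have hsplit : s = insert m (s.erase m) := (Finset.insert_erase hm).symm
      rw [hsplit, Finset.prod_insert (Finset.notMem_erase m s),
        Finset.sum_insert (Finset.notMem_erase m s), hber]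
      have := ih (s.erase m) (Finset.erase_ssubset hm) hδ' hdc'
      set P := ∏ i ∈ s.erase m, (1 - 1 / (atRisk x (x i) : ℝ))
      rw [← this]
      ring

/-- **IPCW representation of the Kaplan–Meier estimator:** `Ĝ(x_i−) > 0` for every `i`
(so each summand is well defined) and, for every real `t`,
`1 − Ŝ(t) = (1/n) Σ_{i : δ_i = 1, x_i ≤ t} 1/Ĝ(x_i−)`. -/
theorem km_ipcw_representation {n : ℕ} (hn : 0 < n)
    (x : Fin n → ℝ) (δ : Fin n → Bool)
    (hpos : ∀ i, 0 < x i) (hinj : Function.Injective x) :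
    (∀ i, 0 < kmGminus x δ (x i)) ∧
    (∀ t : ℝ, 1 - kmS x δ t
      = (1 / n) * ∑ i ∈ univ.filter (fun i => δ i = true ∧ x i ≤ t),
          1 / kmGminus x δ (x i)) := by
  have hn0 : (n : ℝ) ≠ 0 := by positivity
  -- positivity of the two "strictly-below" products
  have hGpos : ∀ m, 0 < kmGminus x δ (x m) := by
    intro m
    rw [kmGminus]
    apply Finset.prod_pos
    intro j hj
    simp only [mem_filter, mem_univ, true_and] at hj
    exact factor_pos x hj.1
  have hSpos : ∀ m : Fin n,
      0 < ∏ j ∈ univ.filter (fun j => x j < x m ∧ δ j = true),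
        (1 - 1 / (atRisk x (x j) : ℝ)) := by
    intro m
    apply Finset.prod_pos
    intro j hj
    simp only [mem_filter, mem_univ, true_and] at hj
    exact factor_pos x hj.1
  -- Lemma C: Sminus * Gminus = Y/n
  have hC : ∀ m : Fin n,
      (∏ j ∈ univ.filter (fun j => x j < x m ∧ δ j = true),
        (1 - 1 / (atRisk x (x j) : ℝ))) * kmGminus x δ (x m)
        = (atRisk x (x m) : ℝ) / n := by
    intro m
    have e1 : ((univ.filter fun j => x j < x m).filter fun j => δ j = true)
        = univ.filter (fun j => x j < x m ∧ δ j = true) := by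
      rw [Finset.filter_filter]
    have e2 : ((univ.filter fun j => x j < x m).filter fun j => ¬ (δ j = true))
        = univ.filter (fun j => x j < x m ∧ δ j = false) := by
      rw [Finset.filter_filter]
      apply Finset.filter_congr
      intro j _
      simp [Bool.not_eq_true]
    have hsplit := Finset.prod_filter_mul_prod_filter_not
      (univ.filter fun j => x j < x m) (fun j => δ j = true)
      (fun j => (1 - 1 / (atRisk x (x j) : ℝ)))
    rw [e1, e2] at hsplit
    have hdc : ∀ i ∈ (univ.filter fun j => x j < x m), ∀ j, x j < x i
        → j ∈ (univ.filter fun j => x j < x m) := by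
      intro i hi j hj
      simp only [mem_filter, mem_univ, true_and] at hi ⊢
      exact lt_trans hj hi
    have hA := prodA hn x hinj (univ.filter fun j => x j < x m) hdc
    have hcard := card_compl x m
    have hcard' : ((univ.filter fun j => x j < x m).card : ℝ) + (atRisk x (x m) : ℝ) = n := by
      exact_mod_cast hcard
    rw [kmGminus, hsplit, hA]
    congr 1
    linarith
  refine ⟨hGpos, fun t => ?_⟩
  have hset : univ.filter (fun i => δ i = true ∧ x i ≤ t)
      = univ.filter (fun i => x i ≤ t ∧ δ i = true) := by
    apply Finset.filter_congr; intro i _; exact and_comm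
  have hδ' : ∀ i ∈ univ.filter (fun i => x i ≤ t ∧ δ i = true), δ i = true := by
    intro i hi; simp only [mem_filter, mem_univ, true_and] at hi; exact hi.2
  have hdc' : ∀ i ∈ univ.filter (fun i => x i ≤ t ∧ δ i = true), ∀ j, δ j = true
      → x j < x i → j ∈ univ.filter (fun i => x i ≤ t ∧ δ i = true) := by
    intro i hi j hj1 hj2
    simp only [mem_filter, mem_univ, true_and] at hi ⊢
    exact ⟨le_of_lt (lt_of_lt_of_le hj2 hi.1), hj1⟩
  have htel := teleB x δ hinj (univ.filter (fun i => x i ≤ t ∧ δ i = true)) hδ' hdc'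
  rw [kmS, hset, htel, Finset.mul_sum]
  apply Finset.sum_congr rfl
  intro i _
  have hCi := hC i
  have hY0 : (atRisk x (x i) : ℝ) ≠ 0 := by
    have := atRisk_pos x i; positivity
  have hG0 : kmGminus x δ (x i) ≠ 0 := ne_of_gt (hGpos i)
  rw [eq_div_iff hn0] at hCi
  field_simp
  linear_combination hCi
end

section
/- The plateau value of the Kaplan–Meier estimator, which under sufficient follow-up estimates the cure fraction, admits the IPCW representation η̂ := Ŝ(max_j x_j) = 1 − (1/n) Σ_{i : δ_i = 1} 1/Ĝ(x_i−). -/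
open Finset

private lemma km_telescope (n : ℕ) (hn : 0 < n) :
    ∀ m, m ≤ n → ∏ k ∈ range m, (1 - ((n : ℝ) - k)⁻¹) = ((n : ℝ) - m) / n := by
  intro m
  induction m with
  | zero =>
    intro _
    have : (n : ℝ) ≠ 0 := Nat.cast_ne_zero.2 hn.ne'
    simp [div_self this]
  | succ m ih =>
    intro h
    have hm : m < n := h
    have hnm : (0 : ℝ) < (n : ℝ) - m := by
      have : (m : ℝ) < n := Nat.cast_lt.2 hm
      linarith
    have hn0 : (n : ℝ) ≠ 0 := Nat.cast_ne_zero.2 hn.ne'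
    rw [Finset.prod_range_succ, ih hm.le]
    push_cast
    field_simp
    ring

private lemma km_B_pos (n : ℕ) (d : ℕ → Bool) (m : ℕ) (hm : m < n) :
    0 < ∏ j ∈ range m, (if d j then 1 else (1 - ((n : ℝ) - j)⁻¹)) := by
  apply Finset.prod_pos
  intro j hj
  rw [Finset.mem_range] at hj
  split
  · norm_num
  · have h1 : (1 : ℝ) < (n : ℝ) - j := by
      have : (j : ℝ) + 1 < n := by
        have : j + 1 < n := lt_of_le_of_lt (Nat.succ_le_of_lt hj) hm
        exact_mod_cast Nat.cast_lt.2 this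
      linarith
    have := inv_lt_one_of_one_lt₀ h1
    linarith

private lemma km_key (n : ℕ) (hn : 0 < n) (d : ℕ → Bool) :
    ∀ m, m ≤ n →
    ∏ k ∈ range m, (if d k then (1 - ((n : ℝ) - k)⁻¹) else 1)
      = 1 - (1 / (n : ℝ)) * ∑ k ∈ range m,
          (if d k then (∏ j ∈ range k, (if d j then 1 else (1 - ((n : ℝ) - j)⁻¹)))⁻¹ else 0) := by
  intro m
  induction m with
  | zero => intro _; simp
  | succ m ih =>
    intro h
    have hm : m < n := h
    have hnm : (0 : ℝ) < (n : ℝ) - m := by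
      have : (m : ℝ) < n := Nat.cast_lt.2 hm
      linarith
    have hn0 : (0 : ℝ) < n := Nat.cast_pos.2 hn
    rw [Finset.prod_range_succ, Finset.sum_range_succ, ih hm.le]
    by_cases hd : d m
    · have hB := km_B_pos n d m hm
      set B := ∏ j ∈ range m, (if d j then 1 else (1 - ((n : ℝ) - j)⁻¹)) with hBdef
      set S := ∑ k ∈ range m,
          (if d k then (∏ j ∈ range k, (if d j then 1 else (1 - ((n : ℝ) - j)⁻¹)))⁻¹ else 0) with hSdef
      have hPB : (∏ k ∈ range m, (if d k then (1 - ((n : ℝ) - k)⁻¹) else 1)) * B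
          = ((n : ℝ) - m) / n := by
        rw [hBdef, ← Finset.prod_mul_distrib]
        rw [Finset.prod_congr rfl (fun k _ => by
          split <;> ring : ∀ k ∈ range m,
            (if d k then (1 - ((n : ℝ) - k)⁻¹) else 1) *
              (if d k then 1 else (1 - ((n : ℝ) - k)⁻¹)) = 1 - ((n : ℝ) - k)⁻¹)]
        exact km_telescope n hn m hm.le
      have hP : (∏ k ∈ range m, (if d k then (1 - ((n : ℝ) - k)⁻¹) else 1))
          = 1 - 1 / (n : ℝ) * S := ih hm.le
      rw [hd]
      simp only [if_true]
      rw [hP] at hPB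
      have hBne : B ≠ 0 := hB.ne'
      have hnmne : (n : ℝ) - m ≠ 0 := hnm.ne'
      have hne : (n : ℝ) ≠ 0 := hn0.ne'
      field_simp
      field_simp at hPB
      nlinarith [hPB]
    · simp [hd]


/-- **IPCW representation of the Kaplan–Meier plateau (cure-fraction estimator):**
if `x_{i₀} = max_j x_j`, then `η̂ = Ŝ(x_{i₀}) = 1 − (1/n) Σ_{i : δ_i = 1} 1/Ĝ(x_i−)`. -/
theorem km_plateau_ipcw {n : ℕ} (hn : 0 < n)
    (x : Fin n → ℝ) (δ : Fin n → Bool)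
    (hpos : ∀ i, 0 < x i) (hinj : Function.Injective x)
    (i0 : Fin n) (hmax : ∀ j, x j ≤ x i0) :
    kmS x δ (x i0)
      = 1 - (1 / n) * ∑ i ∈ univ.filter (fun i => δ i = true),
          1 / kmGminus x δ (x i) := by
  classical
  set σ := Tuple.sort x with hσdef
  have hmono : StrictMono (x ∘ σ) :=
    (Tuple.monotone_sort x).strictMono_of_injective (hinj.comp σ.injective)
  set d : ℕ → Bool := fun m => if h : m < n then δ (σ ⟨m, h⟩) else false with hddef
  have hdval : ∀ k : Fin n, d (k : ℕ) = δ (σ k) := by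
    intro k
    simp only [hddef, dif_pos k.isLt]
  -- number at risk at the k-th smallest time
  have hY : ∀ k : Fin n, atRisk x (x (σ k)) = n - (k : ℕ) := by
    intro k
    unfold atRisk
    have himg : (univ.filter fun j => x (σ k) ≤ x j)
        = Finset.image σ (univ.filter fun j : Fin n => x (σ k) ≤ x (σ j)) := by
      ext j
      simp only [Finset.mem_image, Finset.mem_filter, Finset.mem_univ, true_and]
      constructor
      · intro hj
        exact ⟨σ.symm j, by simpa using hj, by simp⟩
      · rintro ⟨a, ha, rfl⟩
        exact ha
    rw [himg, Finset.card_image_of_injective _ σ.injective]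
    have hfe : (univ.filter fun j : Fin n => x (σ k) ≤ x (σ j)) = Finset.Ici k := by
      ext j
      simp only [Finset.mem_filter, Finset.mem_univ, true_and, Finset.mem_Ici]
      exact ⟨fun h => hmono.le_iff_le.1 h, fun h => hmono.le_iff_le.2 h⟩
    rw [hfe, Fin.card_Ici]
  have hfac : ∀ k : Fin n,
      (1 - 1 / (atRisk x (x (σ k)) : ℝ)) = 1 - ((n : ℝ) - (k : ℕ))⁻¹ := by
    intro k
    rw [hY k, Nat.cast_sub k.isLt.le, one_div]
  -- kmS reduction
  have hS : kmS x δ (x i0)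
      = ∏ m ∈ range n, (if d m then (1 - ((n : ℝ) - m)⁻¹) else 1) := by
    unfold kmS
    have hfilter : (univ.filter fun i => x i ≤ x i0 ∧ δ i = true)
        = univ.filter fun i => δ i = true := by
      ext i; simp [hmax i]
    rw [hfilter, Finset.prod_filter,
      ← Equiv.prod_comp σ (fun i => if δ i = true then (1 - 1 / (atRisk x (x i) : ℝ)) else 1)]
    rw [Finset.prod_congr rfl (fun k _ => by
      rw [hfac k, ← hdval k] :
      ∀ k ∈ univ, (if δ (σ k) = true then (1 - 1 / (atRisk x (x (σ k)) : ℝ)) else 1)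
        = (fun m : ℕ => if d m = true then (1 - ((n : ℝ) - m)⁻¹) else 1) (k : ℕ))]
    exact Fin.prod_univ_eq_prod_range
      (fun m : ℕ => if d m = true then (1 - ((n : ℝ) - m)⁻¹) else 1) n
  -- kmGminus reduction
  have hG : ∀ k : Fin n, kmGminus x δ (x (σ k))
      = ∏ j ∈ range (k : ℕ), (if d j then 1 else (1 - ((n : ℝ) - j)⁻¹)) := by
    intro k
    unfold kmGminus
    rw [Finset.prod_filter,
      ← Equiv.prod_comp σ (fun i => if (x i < x (σ k) ∧ δ i = false)
        then (1 - 1 / (atRisk x (x i) : ℝ)) else 1)]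
    rw [Finset.prod_congr rfl (fun j _ => by
      rw [hfac j, ← hdval j]
      congr 1
      rw [show (x (σ j) < x (σ k)) ↔ ((j : ℕ) < (k : ℕ)) from
        Iff.trans hmono.lt_iff_lt Fin.lt_def] :
      ∀ j ∈ univ, (if (x (σ j) < x (σ k) ∧ δ (σ j) = false)
          then (1 - 1 / (atRisk x (x (σ j)) : ℝ)) else 1)
        = (fun m : ℕ => if (m < (k : ℕ) ∧ d m = false)
            then (1 - ((n : ℝ) - m)⁻¹) else 1) (j : ℕ))]
    rw [Fin.prod_univ_eq_prod_range
      (fun m : ℕ => if (m < (k : ℕ) ∧ d m = false) then (1 - ((n : ℝ) - m)⁻¹) else 1) n]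
    rw [← Finset.prod_subset (Finset.range_subset_range.2 k.isLt.le)
      (fun m _ hm => by
        rw [Finset.mem_range, not_lt] at hm
        exact if_neg (fun hc => absurd hc.1 (not_lt.2 hm)))]
    refine Finset.prod_congr rfl (fun m hm => ?_)
    rw [Finset.mem_range] at hm
    cases hdm : d m
    · simp [hm]
    · simp
  -- sum reduction
  have hsum : (∑ i ∈ univ.filter (fun i => δ i = true), 1 / kmGminus x δ (x i))
      = ∑ m ∈ range n, (if d m then
          (∏ j ∈ range m, (if d j then 1 else (1 - ((n : ℝ) - j)⁻¹)))⁻¹ else 0) := by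
    rw [Finset.sum_filter,
      ← Equiv.sum_comp σ (fun i => if δ i = true then 1 / kmGminus x δ (x i) else 0)]
    rw [Finset.sum_congr rfl (fun k _ => by
      rw [hG k, ← hdval k, one_div] :
      ∀ k ∈ univ, (if δ (σ k) = true then 1 / kmGminus x δ (x (σ k)) else 0)
        = (fun m : ℕ => if d m = true then
            (∏ j ∈ range m, (if d j then 1 else (1 - ((n : ℝ) - j)⁻¹)))⁻¹ else 0) (k : ℕ))]
    exact Fin.sum_univ_eq_sum_range
      (fun m : ℕ => if d m = true then
        (∏ j ∈ range m, (if d j then 1 else (1 - ((n : ℝ) - j)⁻¹)))⁻¹ else 0) n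
  rw [hS, hsum]
  exact km_key n hn d n le_rfl
end

section
/- The tau process admits the probabilistic representation τ(t) = P(T_0 < min(T_1, t)) − P(T_1 < min(T_0, t)) for every real t ≥ 0. -/
open MeasureTheory ProbabilityTheory
open scoped ENNReal


lemma tau_aux
    {Ω : Type*} [MeasureSpace Ω] [IsProbabilityMeasure (ℙ : Measure Ω)]
    (ηa ηb : ℝ) (hηa : 0 ≤ ηa) (hηa' : ηa < 1) (hηb : 0 ≤ ηb) (hηb' : ηb < 1)
    (μa μb : Measure ℝ≥0∞) [IsProbabilityMeasure μa] [IsProbabilityMeasure μb]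
    [NullSingletonClass μa] (htopb : μb {⊤} = 0)
    (Ta Tb : Ω → ℝ≥0∞) (hTa : Measurable Ta) (hTb : Measurable Tb)
    (hindep : IndepFun Ta Tb ℙ)
    (hlawa : ∀ A : Set ℝ≥0∞, MeasurableSet A → ⊤ ∉ A →
      ℙ (Ta ⁻¹' A) = ENNReal.ofReal (1 - ηa) * μa A)
    (hlawb : ∀ A : Set ℝ≥0∞, MeasurableSet A → ⊤ ∉ A →
      ℙ (Tb ⁻¹' A) = ENNReal.ofReal (1 - ηb) * μb A)
    (htailb : ℙ {ω | Tb ω = ⊤} = ENNReal.ofReal ηb)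
    (t : ℝ) (ht : 0 ≤ t) :
    (∫ u in Set.Icc 0 (ENNReal.ofReal t),
        ((1 - ηb) * (μb (Set.Ioi u)).toReal + ηb) ∂(ENNReal.ofReal (1 - ηa) • μa))
      = (ℙ {ω | Ta ω < min (Tb ω) (ENNReal.ofReal t)}).toReal := by
  classical
  set c : ℝ≥0∞ := ENNReal.ofReal t with hc
  have hct : c ≠ ⊤ := ENNReal.ofReal_ne_top
  set νa : Measure ℝ≥0∞ := ENNReal.ofReal (1 - ηa) • μa with hνa
  haveI : NullSingletonClass νa := ⟨fun x => by simp [hνa, measure_singleton]⟩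
  set g : ℝ≥0∞ → ℝ≥0∞ := fun u => ENNReal.ofReal (1 - ηb) * μb (Set.Ioi u)
      + ENNReal.ofReal ηb with hg
  have hanti : Antitone fun u => μb (Set.Ioi u) := fun x y hxy =>
    measure_mono (Set.Ioi_subset_Ioi hxy)
  have hgmeas : Measurable g := (hanti.measurable.const_mul _).add_const _
  have hglt : ∀ u, g u < ⊤ := by
    intro u
    have h1 : μb (Set.Ioi u) ≤ 1 := prob_le_one
    refine ENNReal.add_lt_top.2 ⟨?_, ENNReal.ofReal_lt_top⟩
    calc ENNReal.ofReal (1 - ηb) * μb (Set.Ioi u)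
        ≤ ENNReal.ofReal (1 - ηb) * 1 := mul_le_mul_right h1 _
      _ < ⊤ := by simp [ENNReal.ofReal_lt_top]
  -- Identify P(Tb ∈ Ioi x) for x ≠ ⊤
  have hlawIoi : ∀ x : ℝ≥0∞, x ≠ ⊤ → ℙ (Tb ⁻¹' Set.Ioi x) = g x := by
    intro x hx
    have hsplit : Set.Ioi x = Set.Ioo x ⊤ ∪ {⊤} := by
      ext y
      simp only [Set.mem_Ioi, Set.mem_union, Set.mem_Ioo, Set.mem_singleton_iff]
      constructor
      · intro h
        rcases eq_or_ne y ⊤ with hy | hy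
        · exact Or.inr hy
        · exact Or.inl ⟨h, lt_top_iff_ne_top.2 hy⟩
      · rintro (⟨h, _⟩ | rfl)
        · exact h
        · exact lt_top_iff_ne_top.2 hx
    have hdisj : Disjoint (Set.Ioo x ⊤) ({⊤} : Set ℝ≥0∞) := by
      simp [Set.disjoint_singleton_right]
    have hpre : Tb ⁻¹' Set.Ioi x = Tb ⁻¹' Set.Ioo x ⊤ ∪ Tb ⁻¹' {⊤} := by
      rw [hsplit, Set.preimage_union]
    rw [hpre, measure_union (hdisj.preimage Tb) (hTb (measurableSet_singleton _))]
    have h1 : ℙ (Tb ⁻¹' Set.Ioo x ⊤) = ENNReal.ofReal (1 - ηb) * μb (Set.Ioo x ⊤) :=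
      hlawb _ measurableSet_Ioo (by simp)
    have h2 : μb (Set.Ioo x ⊤) = μb (Set.Ioi x) := by
      rw [hsplit, measure_union hdisj (measurableSet_singleton _), htopb, add_zero]
    have h3 : Tb ⁻¹' ({⊤} : Set ℝ≥0∞) = {ω | Tb ω = ⊤} := rfl
    rw [h1, h2, h3, htailb]
  have hmap : Measure.map (fun ω => (Ta ω, Tb ω)) ℙ = (Measure.map Ta ℙ).prod (Measure.map Tb ℙ) :=
    (indepFun_iff_map_prod_eq_prod_map_map hTa.aemeasurable hTb.aemeasurable).1 hindep
  have hSmeas : MeasurableSet {p : ℝ≥0∞ × ℝ≥0∞ | p.1 < min p.2 c} :=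
    measurableSet_lt measurable_fst (measurable_snd.min measurable_const)
  have key : ℙ {ω | Ta ω < min (Tb ω) c}
      = ∫⁻ x, Set.indicator (Set.Iio c) g x ∂(Measure.map Ta ℙ) := by
    have h1 : {ω | Ta ω < min (Tb ω) c}
        = (fun ω => (Ta ω, Tb ω)) ⁻¹' {p : ℝ≥0∞ × ℝ≥0∞ | p.1 < min p.2 c} := rfl
    rw [h1, ← Measure.map_apply (hTa.prodMk hTb) hSmeas, hmap,
      Measure.prod_apply hSmeas]
    refine lintegral_congr fun x => ?_
    rcases lt_or_ge x c with hx | hx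
    · have hxe : x ≠ ⊤ := ne_top_of_lt (lt_of_lt_of_le hx le_top)
      have hset : (Prod.mk x ⁻¹' {p : ℝ≥0∞ × ℝ≥0∞ | p.1 < min p.2 c}) = Set.Ioi x := by
        ext y; simp [Set.mem_Ioi, lt_min_iff, hx]
      rw [hset, Measure.map_apply hTb measurableSet_Ioi, hlawIoi x hxe,
        Set.indicator_of_mem (Set.mem_Iio.2 hx)]
    · have hset : (Prod.mk x ⁻¹' {p : ℝ≥0∞ × ℝ≥0∞ | p.1 < min p.2 c}) = ∅ := by
        ext y
        simp only [Set.mem_preimage, Set.mem_setOf_eq, lt_min_iff, Set.mem_empty_iff_false,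
          iff_false, not_and]
        intro _; exact not_lt.2 hx
      rw [hset, Set.indicator_of_notMem (by simpa using not_lt.2 hx)]
      simp
  have hrestrict : (Measure.map Ta ℙ).restrict (Set.Iio c) = νa.restrict (Set.Iio c) := by
    ext s hs
    rw [Measure.restrict_apply hs, Measure.restrict_apply hs,
      Measure.map_apply hTa (hs.inter measurableSet_Iio),
      hlawa _ (hs.inter measurableSet_Iio) (by
        rintro ⟨-, h⟩
        exact absurd h (by simp [Set.mem_Iio, lt_top_iff_ne_top, hct]))]
    simp [hνa, Measure.smul_apply, smul_eq_mul]
  have hIcc : Set.Icc (0 : ℝ≥0∞) c = Set.Iic c := by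
    ext x; simp [Set.mem_Icc, Set.mem_Iic, zero_le]
  have hae : Set.Iio c =ᵐ[νa] Set.Iic c := Iio_ae_eq_Iic
  have key2 : ℙ {ω | Ta ω < min (Tb ω) c} = ∫⁻ x in Set.Icc 0 c, g x ∂νa := by
    rw [key, lintegral_indicator measurableSet_Iio, hrestrict, hIcc,
      Measure.restrict_congr_set hae]
  -- Bochner side
  have hfin : IsFiniteMeasure (νa.restrict (Set.Icc 0 c)) := by
    constructor
    rw [Measure.restrict_apply_univ]
    exact lt_of_le_of_lt (measure_mono (Set.subset_univ _))
      (by simp [hνa, Measure.smul_apply, ENNReal.mul_lt_top, measure_univ])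
  have hbochner : (∫ u in Set.Icc 0 c,
      ((1 - ηb) * (μb (Set.Ioi u)).toReal + ηb) ∂νa)
      = (∫⁻ u in Set.Icc 0 c, g u ∂νa).toReal := by
    rw [← integral_toReal (hgmeas.aemeasurable) (ae_of_all _ hglt)]
    refine integral_congr_ae (ae_of_all _ fun u => ?_)
    have h1 : ENNReal.ofReal (1 - ηb) * μb (Set.Ioi u) ≠ ⊤ := by
      have := hglt u
      rw [hg] at this
      exact (lt_of_le_of_lt le_self_add this).ne
    rw [hg]
    simp only []
    rw [ENNReal.toReal_add h1 ENNReal.ofReal_ne_top, ENNReal.toReal_mul,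
      ENNReal.toReal_ofReal (by linarith), ENNReal.toReal_ofReal hηb]
  rw [hbochner, key2]

/-- **Probabilistic representation of the tau process.** For `ℓ = 0,1` let
`η_ℓ ∈ [0,1)` and `μ_ℓ` be an atomless Borel probability measure on `[0,∞)`
(modelled on `[0,∞]` with `μ_ℓ {∞} = 0`); set `ν_ℓ = (1 − η_ℓ)μ_ℓ` and
`S_ℓ(u) = (1 − η_ℓ)μ_ℓ((u,∞)) + η_ℓ`. Let `T_0, T_1 : Ω → [0,∞]` be independent
with `P(T_ℓ ∈ A) = ν_ℓ(A)` for Borel `A ⊆ [0,∞)` and `P(T_ℓ = ∞) = η_ℓ`. Then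
for every `t ≥ 0`,
`τ(t) = ∫_{[0,t]} S_1 dν_0 − ∫_{[0,t]} S_0 dν_1
      = P(T_0 < min(T_1,t)) − P(T_1 < min(T_0,t))`. -/
theorem tau_probabilistic_representation
    {Ω : Type*} [MeasureSpace Ω] [IsProbabilityMeasure (ℙ : Measure Ω)]
    (η0 η1 : ℝ) (hη0 : 0 ≤ η0) (hη0' : η0 < 1) (hη1 : 0 ≤ η1) (hη1' : η1 < 1)
    (μ0 μ1 : Measure ℝ≥0∞) [IsProbabilityMeasure μ0] [IsProbabilityMeasure μ1]
    [NullSingletonClass μ0] [NullSingletonClass μ1] (htop0 : μ0 {⊤} = 0) (htop1 : μ1 {⊤} = 0)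
    (T0 T1 : Ω → ℝ≥0∞) (hT0 : Measurable T0) (hT1 : Measurable T1)
    (hindep : IndepFun T0 T1 ℙ)
    (hlaw0 : ∀ A : Set ℝ≥0∞, MeasurableSet A → ⊤ ∉ A →
      ℙ (T0 ⁻¹' A) = ENNReal.ofReal (1 - η0) * μ0 A)
    (hlaw1 : ∀ A : Set ℝ≥0∞, MeasurableSet A → ⊤ ∉ A →
      ℙ (T1 ⁻¹' A) = ENNReal.ofReal (1 - η1) * μ1 A)
    (htail0 : ℙ {ω | T0 ω = ⊤} = ENNReal.ofReal η0)
    (htail1 : ℙ {ω | T1 ω = ⊤} = ENNReal.ofReal η1) :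
    ∀ t : ℝ, 0 ≤ t →
      (∫ u in Set.Icc 0 (ENNReal.ofReal t),
          ((1 - η1) * (μ1 (Set.Ioi u)).toReal + η1) ∂(ENNReal.ofReal (1 - η0) • μ0))
        - (∫ u in Set.Icc 0 (ENNReal.ofReal t),
            ((1 - η0) * (μ0 (Set.Ioi u)).toReal + η0) ∂(ENNReal.ofReal (1 - η1) • μ1))
      = (ℙ {ω | T0 ω < min (T1 ω) (ENNReal.ofReal t)}).toReal
        - (ℙ {ω | T1 ω < min (T0 ω) (ENNReal.ofReal t)}).toReal := by
  intro t ht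
  rw [tau_aux η0 η1 hη0 hη0' hη1 hη1' μ0 μ1 htop1 T0 T1 hT0 hT1 hindep hlaw0 hlaw1 htail1 t ht,
    tau_aux η1 η0 hη1 hη1' hη0 hη0' μ1 μ0 htop0 T1 T0 hT1 hT0 hindep.symm hlaw1 hlaw0 htail0 t ht]
end

section
/- The susceptible tau process admits the probabilistic representation τ_a(t) = [(P(T_0 < min(T_1, t)) − η_1 F_0(t)) − (P(T_1 < min(T_0, t)) − η_0 F_1(t))] / [(1 − η_0)(1 − η_1)] for every real t ≥ 0, where F_ℓ(t) = P(T_ℓ ≤ t). -/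
open MeasureTheory ProbabilityTheory
open scoped ENNReal


lemma aux_smul_prod {α β : Type*} [MeasurableSpace α] [MeasurableSpace β]
    (c : ℝ≥0∞) (μ : Measure α) (ν : Measure β) [SFinite μ] [SFinite ν] :
    (c • μ).prod ν = c • μ.prod ν := by
  ext s hs
  rw [Measure.smul_apply, Measure.prod_apply hs, Measure.prod_apply hs,
    lintegral_smul_measure, smul_eq_mul]

lemma aux_prod_smul {α β : Type*} [MeasurableSpace α] [MeasurableSpace β]
    (c : ℝ≥0∞) (hc : c ≠ ⊤) (μ : Measure α) (ν : Measure β) [SFinite μ] [SFinite ν] :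
    μ.prod (c • ν) = c • μ.prod ν := by
  ext s hs
  rw [Measure.smul_apply, Measure.prod_apply hs, Measure.prod_apply hs, smul_eq_mul,
    ← lintegral_const_mul' _ _ hc]
  simp only [Measure.smul_apply, smul_eq_mul]

lemma aux_law_decomp {Ω : Type*} [MeasureSpace Ω] (η : ℝ)
    (μ : Measure ℝ≥0∞) (htop : μ {⊤} = 0) (T : Ω → ℝ≥0∞) (hT : Measurable T)
    (hlaw : ∀ A : Set ℝ≥0∞, MeasurableSet A → ⊤ ∉ A →
      ℙ (T ⁻¹' A) = ENNReal.ofReal (1 - η) * μ A)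
    (htail : ℙ {ω | T ω = ⊤} = ENNReal.ofReal η) :
    Measure.map T ℙ = ENNReal.ofReal (1 - η) • μ + ENNReal.ofReal η • Measure.dirac ⊤ := by
  ext A hA
  rw [Measure.map_apply hT hA]
  have hsplit : T ⁻¹' A = T ⁻¹' (A \ {⊤}) ∪ T ⁻¹' (A ∩ {⊤}) := by
    rw [← Set.preimage_union, Set.diff_union_inter]
  have hdisj : Disjoint (T ⁻¹' (A \ {⊤})) (T ⁻¹' (A ∩ {⊤})) :=
    (Set.disjoint_sdiff_inter (s := A) (t := {⊤})).preimage T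
  rw [hsplit, measure_union hdisj (hT (hA.inter (measurableSet_singleton _))),
    hlaw _ (hA.diff (measurableSet_singleton _)) (by simp), measure_diff_null htop]
  by_cases h : ⊤ ∈ A
  · have h1 : A ∩ {⊤} = {⊤} := by
      apply Set.inter_eq_self_of_subset_right
      simpa using h
    have h2 : T ⁻¹' (A ∩ {⊤}) = {ω | T ω = ⊤} := by
      rw [h1]; ext ω; simp
    rw [h2, htail]
    simp [Measure.dirac_apply' _ hA, Set.indicator_of_mem h]
  · have h1 : A ∩ {⊤} = (∅ : Set ℝ≥0∞) := by
      ext x; simp; rintro hx rfl; exact h hx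
    rw [h1]
    simp [Measure.dirac_apply' _ hA, Set.indicator_of_notMem h]

lemma aux_key {Ω : Type*} [MeasureSpace Ω] [IsProbabilityMeasure (ℙ : Measure Ω)]
    (η0 η1 : ℝ)
    (μ0 μ1 : Measure ℝ≥0∞) [IsProbabilityMeasure μ0] [IsProbabilityMeasure μ1]
    (htop0 : μ0 {⊤} = 0) (htop1 : μ1 {⊤} = 0)
    (T0 T1 : Ω → ℝ≥0∞) (hT0 : Measurable T0) (hT1 : Measurable T1)
    (hindep : IndepFun T0 T1 ℙ)
    (hlaw0 : ∀ A : Set ℝ≥0∞, MeasurableSet A → ⊤ ∉ A →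
      ℙ (T0 ⁻¹' A) = ENNReal.ofReal (1 - η0) * μ0 A)
    (hlaw1 : ∀ A : Set ℝ≥0∞, MeasurableSet A → ⊤ ∉ A →
      ℙ (T1 ⁻¹' A) = ENNReal.ofReal (1 - η1) * μ1 A)
    (htail0 : ℙ {ω | T0 ω = ⊤} = ENNReal.ofReal η0)
    (htail1 : ℙ {ω | T1 ω = ⊤} = ENNReal.ofReal η1)
    (s : ℝ≥0∞) :
    ℙ {ω | T0 ω < min (T1 ω) s}
      = ENNReal.ofReal (1 - η0) * ENNReal.ofReal (1 - η1)
          * (∫⁻ u in Set.Iio s, μ1 (Set.Ioi u) ∂μ0)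
        + ENNReal.ofReal (1 - η0) * ENNReal.ofReal η1 * μ0 (Set.Iio s) := by
  set S : Set (ℝ≥0∞ × ℝ≥0∞) := {p | p.1 < p.2 ∧ p.1 < s} with hSdef
  have hS : MeasurableSet S :=
    (measurableSet_lt measurable_fst measurable_snd).inter
      (measurable_fst (measurableSet_Iio (a := s)))
  have hset : {ω | T0 ω < min (T1 ω) s} = (fun ω => (T0 ω, T1 ω)) ⁻¹' S := by
    ext ω; simp [hSdef, lt_min_iff]
  have hmap := (indepFun_iff_map_prod_eq_prod_map_map hT0.aemeasurable hT1.aemeasurable).mp hindep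
  have h0 := aux_law_decomp η0 μ0 htop0 T0 hT0 hlaw0 htail0
  have h1 := aux_law_decomp η1 μ1 htop1 T1 hT1 hlaw1 htail1
  rw [hset, ← Measure.map_apply (hT0.prodMk hT1) hS, hmap, h0, h1]
  rw [Measure.prod_add, aux_prod_smul _ ENNReal.ofReal_ne_top,
    aux_prod_smul _ ENNReal.ofReal_ne_top, Measure.add_prod, Measure.add_prod,
    aux_smul_prod, aux_smul_prod, aux_smul_prod, aux_smul_prod, Measure.prod_dirac, Measure.dirac_prod,
    Measure.dirac_prod_dirac]
  have hμμ : (μ0.prod μ1) S = ∫⁻ u in Set.Iio s, μ1 (Set.Ioi u) ∂μ0 := by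
    rw [Measure.prod_apply hS, ← lintegral_indicator measurableSet_Iio _]
    congr 1
    funext u
    by_cases hu : u < s
    · have h1 : (Set.Iio s).indicator (fun u => μ1 (Set.Ioi u)) u = μ1 (Set.Ioi u) :=
        Set.indicator_of_mem (Set.mem_Iio.mpr hu) _
      rw [h1]
      congr 1
      ext v; simp [hSdef, hu]
    · have h1 : (Set.Iio s).indicator (fun u => μ1 (Set.Ioi u)) u = 0 :=
        Set.indicator_of_notMem (fun h => hu (Set.mem_Iio.mp h)) _
      have h2 : Prod.mk u ⁻¹' S = ∅ := by
        ext v; simp only [hSdef, Set.mem_setOf_eq, Set.mem_empty_iff_false, iff_false]; exact fun h => hu h.2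
      rw [h1, h2, measure_empty]
  have hμd : Measure.map (fun x => (x, (⊤ : ℝ≥0∞))) μ0 S = μ0 (Set.Iio s) := by
    rw [Measure.map_apply measurable_prodMk_right hS]
    congr 1
    ext u
    simp only [hSdef, Set.mem_preimage, Set.mem_setOf_eq, Set.mem_Iio]
    constructor
    · exact fun h => h.2
    · exact fun h => ⟨lt_of_lt_of_le h le_top, h⟩
  have hdμ : Measure.map (Prod.mk (⊤ : ℝ≥0∞)) μ1 S = 0 := by
    rw [Measure.map_apply measurable_prodMk_left hS]
    have : Prod.mk (⊤ : ℝ≥0∞) ⁻¹' S = ∅ := by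
      ext v; simp [hSdef]
    rw [this, measure_empty]
  have hdd : Measure.dirac ((⊤ : ℝ≥0∞), (⊤ : ℝ≥0∞)) S = 0 := by
    rw [Measure.dirac_apply' _ hS]
    simp [hSdef]
  simp only [Measure.add_apply, Measure.smul_apply, smul_eq_mul]
  rw [hμμ, hμd, hdμ, hdd]
  ring

/-- **Probabilistic representation of the susceptible tau process.** For `ℓ = 0,1`
let `η_ℓ ∈ [0,1)` and `μ_ℓ` be an atomless Borel probability measure on `[0,∞)`
(modelled on `[0,∞]` with `μ_ℓ {∞} = 0`); set `ν_ℓ = (1 − η_ℓ)μ_ℓ` and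
`S_{a,ℓ}(u) = μ_ℓ((u,∞))`. Let `T_0, T_1 : Ω → [0,∞]` be independent with
`P(T_ℓ ∈ A) = ν_ℓ(A)` for Borel `A ⊆ [0,∞)` and `P(T_ℓ = ∞) = η_ℓ`. Then for
every `t ≥ 0`, with `F_ℓ(t) = P(T_ℓ ≤ t)`,
`τ_a(t) = ∫_{[0,t]} S_{a,1} dμ_0 − ∫_{[0,t]} S_{a,0} dμ_1
  = [(P(T_0 < min(T_1,t)) − η_1 F_0(t)) − (P(T_1 < min(T_0,t)) − η_0 F_1(t))]
      / [(1 − η_0)(1 − η_1)]`. -/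
theorem susceptible_tau_probabilistic_representation
    {Ω : Type*} [MeasureSpace Ω] [IsProbabilityMeasure (ℙ : Measure Ω)]
    (η0 η1 : ℝ) (hη0 : 0 ≤ η0) (hη0' : η0 < 1) (hη1 : 0 ≤ η1) (hη1' : η1 < 1)
    (μ0 μ1 : Measure ℝ≥0∞) [IsProbabilityMeasure μ0] [IsProbabilityMeasure μ1]
    [NullSingletonClass μ0] [NullSingletonClass μ1] (htop0 : μ0 {⊤} = 0) (htop1 : μ1 {⊤} = 0)
    (T0 T1 : Ω → ℝ≥0∞) (hT0 : Measurable T0) (hT1 : Measurable T1)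
    (hindep : IndepFun T0 T1 ℙ)
    (hlaw0 : ∀ A : Set ℝ≥0∞, MeasurableSet A → ⊤ ∉ A →
      ℙ (T0 ⁻¹' A) = ENNReal.ofReal (1 - η0) * μ0 A)
    (hlaw1 : ∀ A : Set ℝ≥0∞, MeasurableSet A → ⊤ ∉ A →
      ℙ (T1 ⁻¹' A) = ENNReal.ofReal (1 - η1) * μ1 A)
    (htail0 : ℙ {ω | T0 ω = ⊤} = ENNReal.ofReal η0)
    (htail1 : ℙ {ω | T1 ω = ⊤} = ENNReal.ofReal η1) :
    ∀ t : ℝ, 0 ≤ t →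
      (∫ u in Set.Icc 0 (ENNReal.ofReal t), (μ1 (Set.Ioi u)).toReal ∂μ0)
        - (∫ u in Set.Icc 0 (ENNReal.ofReal t), (μ0 (Set.Ioi u)).toReal ∂μ1)
      = (((ℙ {ω | T0 ω < min (T1 ω) (ENNReal.ofReal t)}).toReal
            - η1 * (ℙ {ω | T0 ω ≤ ENNReal.ofReal t}).toReal)
          - ((ℙ {ω | T1 ω < min (T0 ω) (ENNReal.ofReal t)}).toReal
            - η0 * (ℙ {ω | T1 ω ≤ ENNReal.ofReal t}).toReal))
        / ((1 - η0) * (1 - η1)) := by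
  intro t ht
  set s : ℝ≥0∞ := ENNReal.ofReal t with hsdef
  have hs : s ≠ ⊤ := ENNReal.ofReal_ne_top
  have hIcc : Set.Icc (0 : ℝ≥0∞) s = Set.Iic s := by
    ext u; simp [zero_le]
  have haeq0 : Set.Icc (0 : ℝ≥0∞) s =ᵐ[μ0] Set.Iio s := by
    rw [hIcc]; exact (Iio_ae_eq_Iic (μ := μ0) (a := s)).symm
  have haeq1 : Set.Icc (0 : ℝ≥0∞) s =ᵐ[μ1] Set.Iio s := by
    rw [hIcc]; exact (Iio_ae_eq_Iic (μ := μ1) (a := s)).symm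
  have hm1 : Measurable (fun u : ℝ≥0∞ => μ1 (Set.Ioi u)) :=
    measurable_measure_prodMk_left (measurableSet_lt measurable_fst measurable_snd)
  have hm0 : Measurable (fun u : ℝ≥0∞ => μ0 (Set.Ioi u)) :=
    measurable_measure_prodMk_left (measurableSet_lt measurable_fst measurable_snd)
  have key01 : ∫ u in Set.Icc 0 s, (μ1 (Set.Ioi u)).toReal ∂μ0
      = (∫⁻ u in Set.Iio s, μ1 (Set.Ioi u) ∂μ0).toReal := by
    rw [setIntegral_congr_set haeq0]
    exact integral_toReal hm1.aemeasurable.restrict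
      (ae_of_all _ fun u => measure_lt_top μ1 _)
  have key10 : ∫ u in Set.Icc 0 s, (μ0 (Set.Ioi u)).toReal ∂μ1
      = (∫⁻ u in Set.Iio s, μ0 (Set.Ioi u) ∂μ1).toReal := by
    rw [setIntegral_congr_set haeq1]
    exact integral_toReal hm0.aemeasurable.restrict
      (ae_of_all _ fun u => measure_lt_top μ0 _)
  have hL01 : (∫⁻ u in Set.Iio s, μ1 (Set.Ioi u) ∂μ0) ≠ ⊤ := by
    refine ne_of_lt (lt_of_le_of_lt (le_trans (lintegral_mono fun u => prob_le_one)
      ?_) ENNReal.one_lt_top)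
    rw [setLIntegral_one]
    exact prob_le_one
  have hL10 : (∫⁻ u in Set.Iio s, μ0 (Set.Ioi u) ∂μ1) ≠ ⊤ := by
    refine ne_of_lt (lt_of_le_of_lt (le_trans (lintegral_mono fun u => prob_le_one)
      ?_) ENNReal.one_lt_top)
    rw [setLIntegral_one]
    exact prob_le_one
  have hp0 := aux_key η0 η1 μ0 μ1 htop0 htop1 T0 T1 hT0 hT1 hindep hlaw0 hlaw1 htail0 htail1 s
  have hp1 := aux_key η1 η0 μ1 μ0 htop1 htop0 T1 T0 hT1 hT0 hindep.symm hlaw1 hlaw0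
    htail1 htail0 s
  have hF0 : ℙ {ω | T0 ω ≤ s} = ENNReal.ofReal (1 - η0) * μ0 (Set.Iio s) := by
    have h1 : {ω | T0 ω ≤ s} = T0 ⁻¹' Set.Iic s := rfl
    rw [h1, hlaw0 _ measurableSet_Iic (fun h => hs (top_le_iff.mp (Set.mem_Iic.mp h)))]
    exact congrArg _ (measure_congr (Iio_ae_eq_Iic (μ := μ0) (a := s))).symm
  have hF1 : ℙ {ω | T1 ω ≤ s} = ENNReal.ofReal (1 - η1) * μ1 (Set.Iio s) := by
    have h1 : {ω | T1 ω ≤ s} = T1 ⁻¹' Set.Iic s := rfl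
    rw [h1, hlaw1 _ measurableSet_Iic (fun h => hs (top_le_iff.mp (Set.mem_Iic.mp h)))]
    exact congrArg _ (measure_congr (Iio_ae_eq_Iic (μ := μ1) (a := s))).symm
  rw [key01, key10, hp0, hp1, hF0, hF1]
  have conv : ∀ (x y z : ℝ) (L m : ℝ≥0∞), 0 ≤ x → 0 ≤ y → 0 ≤ z → L ≠ ⊤ → m ≠ ⊤ →
      (ENNReal.ofReal x * ENNReal.ofReal y * L
        + ENNReal.ofReal x * ENNReal.ofReal z * m).toReal
      = x * y * L.toReal + x * z * m.toReal := by
    intro x y z L m hx hy hz hL hm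
    rw [ENNReal.toReal_add
        (ENNReal.mul_ne_top (ENNReal.mul_ne_top ENNReal.ofReal_ne_top ENNReal.ofReal_ne_top) hL)
        (ENNReal.mul_ne_top (ENNReal.mul_ne_top ENNReal.ofReal_ne_top ENNReal.ofReal_ne_top) hm),
      ENNReal.toReal_mul, ENNReal.toReal_mul, ENNReal.toReal_mul, ENNReal.toReal_mul,
      ENNReal.toReal_ofReal hx, ENNReal.toReal_ofReal hy, ENNReal.toReal_ofReal hz]
  have hm0top : μ0 (Set.Iio s) ≠ ⊤ := measure_ne_top _ _
  have hm1top : μ1 (Set.Iio s) ≠ ⊤ := measure_ne_top _ _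
  rw [conv _ _ _ _ _ (by linarith) (by linarith) hη1 hL01 hm0top,
    conv _ _ _ _ _ (by linarith) (by linarith) hη0 hL10 hm1top,
    ENNReal.toReal_mul, ENNReal.toReal_mul,
    ENNReal.toReal_ofReal (by linarith), ENNReal.toReal_ofReal (by linarith)]
  have h0 : (1 : ℝ) - η0 ≠ 0 := by linarith
  have h1 : (1 : ℝ) - η1 ≠ 0 := by linarith
  field_simp
  ring
end
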